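/- For every nonnegative integer n and i ∈ {1,2}, the number of partitions of n with distinct odd parts, smallest odd part ≥ 2i−1, and smallest even part at least twice the quantity (total number of parts plus i−1), equals the number of partitions of n with parts ≥ 2i−1, no two parts equal or consecutive, and no two even parts equal or consecutive. -/

import Mathlib

/-- Odd parts are pairwise distinct. -/
def distinctOddParts (m : Multiset ℕ) : Prop := ∀ a, Odd a → m.count a ≤ 1

/-- Every even part is at least `k` (vacuous if no even part). -/
def minEvenGe (m : Multiset ℕ) (k : ℕ) : Prop := ∀ a ∈ m, Even a → k ≤ a

/-- Every odd part is at least `k` (vacuous if no odd part). -/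
def minOddGe (m : Multiset ℕ) (k : ℕ) : Prop := ∀ a ∈ m, Odd a → k ≤ a

/-- No two parts are equal or consecutive, and no two even parts are equal or
consecutive even numbers: parts pairwise differ by at least 2, even parts by at least 4. -/
def gapCond (m : Multiset ℕ) : Prop :=
  (∀ a, m.count a ≤ 1) ∧ (∀ a ∈ m, ∀ b ∈ m, a < b → a + 2 ≤ b) ∧
  (∀ a ∈ m, ∀ b ∈ m, Even a → Even b → a < b → a + 4 ≤ b)

/-- Number of even parts. -/
def evenCount (m : Multiset ℕ) : ℕ := (m.filter (fun a => Even a)).card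

/-- Number of odd parts. -/
def oddCount (m : Multiset ℕ) : ℕ := (m.filter (fun a => Odd a)).card

namespace NC

/-- add `2*j` to the `j`-th entry -/
def stair (l : List ℕ) : List ℕ := List.zipWith (fun a j => a + 2*j) l (List.range l.length)
/-- subtract `2*j` from the `j`-th entry -/
def destair (l : List ℕ) : List ℕ := List.zipWith (fun a j => a - 2*j) l (List.range l.length)

@[simp] lemma length_stair (l : List ℕ) : (stair l).length = l.length := by
  simp [stair]
@[simp] lemma length_destair (l : List ℕ) : (destair l).length = l.length := by
  simp [destair]

lemma getElem_stair (l : List ℕ) (j : ℕ) (h : j < (stair l).length) :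
    (stair l)[j] = l[j]'(by simpa using h) + 2*j := by
  simp [stair, List.getElem_zipWith]
lemma getElem_destair (l : List ℕ) (j : ℕ) (h : j < (destair l).length) :
    (destair l)[j] = l[j]'(by simpa using h) - 2*j := by
  simp [destair, List.getElem_zipWith]

lemma destair_stair (l : List ℕ) : destair (stair l) = l := by
  apply List.ext_getElem (by simp)
  intro j h1 h2
  rw [getElem_destair, getElem_stair]
  omega

/-- `tall l` : the `j`-th entry is at least `2*j`. -/
def tall (l : List ℕ) : Prop := ∀ j (h : j < l.length), 2*j ≤ l[j]

lemma stair_destair {l : List ℕ} (h : tall l) : stair (destair l) = l := by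
  apply List.ext_getElem (by simp)
  intro j h1 h2
  rw [getElem_stair, getElem_destair]
  have := h j h2
  omega

lemma sum_zip_add : ∀ (l w : List ℕ), l.length = w.length →
    (List.zipWith (fun a j => a + 2*j) l w).sum = l.sum + 2 * w.sum
  | [], [], _ => by simp
  | a :: l, b :: w, h => by
    simp only [List.zipWith_cons_cons, List.sum_cons, sum_zip_add l w (by simpa using h)]
    ring

lemma sum_range_two (n : ℕ) : 2 * (List.range n).sum = n * (n - 1) := by
  induction n with
  | zero => simp
  | succ m ih =>
    rw [List.range_succ, List.sum_append]
    simp only [List.sum_cons, List.sum_nil]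
    cases m with
    | zero => simp
    | succ k => simp only [Nat.add_sub_cancel] at *; ring_nf at *; omega

lemma sum_stair (l : List ℕ) : (stair l).sum = l.sum + l.length * (l.length - 1) := by
  rw [stair, sum_zip_add l _ (by simp), ← sum_range_two]

lemma sum_destair {l : List ℕ} (h : tall l) :
    (destair l).sum + l.length * (l.length - 1) = l.sum := by
  conv_rhs => rw [← stair_destair h]
  rw [sum_stair]
  simp

/-- ascending with gaps at least 2 -/
def gap2 (l : List ℕ) : Prop := ∀ j (h : j + 1 < l.length), l[j]'(by omega) + 2 ≤ l[j+1]

lemma gap2_pair {l : List ℕ} (h : gap2 l) :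
    ∀ d i (hd : i + d < l.length), l[i]'(by omega) + 2*d ≤ l[i+d]'hd := by
  intro d
  induction d with
  | zero =>
    intro i hd
    have : l[i + 0]'hd = l[i]'(by omega) := rfl
    omega
  | succ e ih =>
    intro i hd
    have h1 : i + e + 1 < l.length := by omega
    have h2 := h (i+e) (by omega)
    have h3 := ih i (by omega)
    have h4 : l[i+(e+1)]'hd = l[i+e+1]'h1 := rfl
    omega

lemma gap2_tall {l : List ℕ} (h : gap2 l) : tall l := by
  intro j hj
  have h2 := gap2_pair h j 0 (by omega)
  have h3 : l[0+j]'(by omega) = l[j]'hj := by simp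
  omega


lemma sorted_iff_getElem {l : List ℕ} :
    l.Pairwise (· ≤ ·) ↔ ∀ i j (hi : i < l.length) (hj : j < l.length), i < j → l[i] ≤ l[j] :=
  List.pairwise_iff_getElem

lemma sorted_stair_gap2 {l : List ℕ} (h : l.Pairwise (· ≤ ·)) : gap2 (stair l) := by
  intro j hj
  rw [getElem_stair, getElem_stair]
  have := sorted_iff_getElem.mp h j (j+1) (by simp at hj; omega) (by simpa using hj) (by omega)
  omega

lemma gap2_sorted {l : List ℕ} (h : gap2 l) : l.Pairwise (· ≤ ·) := by
  rw [sorted_iff_getElem]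
  intro i j hi hj hij
  have h2 := gap2_pair h (j - i) i (by omega)
  have h3 : l[i + (j-i)]'(by omega) = l[j]'hj := by congr 1; omega
  omega

lemma gap2_nodup {l : List ℕ} (h : gap2 l) : l.Nodup := by
  rw [List.Nodup]
  rw [List.pairwise_iff_getElem]
  intro i j hi hj hij
  have h2 := gap2_pair h (j - i) i (by omega)
  have h3 : l[i + (j-i)]'(by omega) = l[j]'hj := by congr 1; omega
  omega

lemma sorted_destair {l : List ℕ} (h : gap2 l) : (destair l).Pairwise (· ≤ ·) := by
  rw [sorted_iff_getElem]
  intro i j hi hj hij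
  simp only [length_destair] at hi hj
  rw [getElem_destair, getElem_destair]
  have h2 := gap2_pair h (j - i) i (by omega)
  have h3 : l[i + (j-i)]'(by omega) = l[j]'hj := by congr 1; omega
  omega

lemma gap2_of_sorted_nodup_parity {l : List ℕ} {r : ℕ} (h : l.Pairwise (· ≤ ·))
    (hn : l.Nodup) (hp : ∀ x ∈ l, x % 2 = r) : gap2 l := by
  intro j hj
  have h1 := sorted_iff_getElem.mp h j (j+1) (by omega) hj (by omega)
  have h2 := List.pairwise_iff_getElem.mp hn j (j+1) (by omega) hj (by omega)
  have h3 := hp _ (l.getElem_mem (by omega : j < l.length))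
  have h4 := hp _ (l.getElem_mem hj)
  omega

lemma sort_coe {l : List ℕ} (h : l.Pairwise (· ≤ ·)) : Multiset.sort (↑l : Multiset ℕ) (· ≤ ·) = l :=
  List.Perm.eq_of_pairwise' (Multiset.pairwise_sort _ _) h
    (Multiset.coe_eq_coe.mp (Multiset.sort_eq _ _))

lemma sorted_map_sub {l : List ℕ} (c : ℕ) (h : l.Pairwise (· ≤ ·)) :
    (l.map (· - c)).Pairwise (· ≤ ·) := by
  rw [List.pairwise_map]
  exact h.imp (fun hab => by omega)

lemma sorted_map_add {l : List ℕ} (c : ℕ) (h : l.Pairwise (· ≤ ·)) :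
    (l.map (· + c)).Pairwise (· ≤ ·) := by
  rw [List.pairwise_map]
  exact h.imp (fun hab => by omega)

lemma map_sub_add {l : List ℕ} (c : ℕ) (h : ∀ x ∈ l, c ≤ x) :
    (l.map (· - c)).map (· + c) = l := by
  rw [List.map_map]
  conv_rhs => rw [← List.map_id l]
  exact List.map_congr_left fun a ha => by have := h a ha; simp; omega

lemma map_add_sub (l : List ℕ) (c : ℕ) :
    (l.map (· + c)).map (· - c) = l := by
  rw [List.map_map]
  conv_rhs => rw [← List.map_id l]
  exact List.map_congr_left fun a ha => by simp

lemma sum_map_sub {l : List ℕ} (c : ℕ) (h : ∀ x ∈ l, c ≤ x) :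
    (l.map (· - c)).sum + c * l.length = l.sum := by
  induction l with
  | nil => simp
  | cons a l ih =>
    have h1 := h a (by simp)
    have h2 := ih (fun x hx => h x (by simp [hx]))
    simp only [List.map_cons, List.sum_cons, List.length_cons]
    ring_nf
    ring_nf at h2
    omega

lemma sum_map_add (l : List ℕ) (c : ℕ) :
    (l.map (· + c)).sum = l.sum + c * l.length := by
  induction l with
  | nil => simp
  | cons a l ih => simp only [List.map_cons, List.sum_cons, List.length_cons, ih]; ring

lemma two_le_count_of_adj {l : List ℕ} {j : ℕ} (h : j + 1 < l.length)
    (he : l[j]'(by omega) = l[j+1]'h) : 2 ≤ l.count (l[j+1]'h) := by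
  have hd : List.drop j l = l[j]'(by omega) :: l[j+1]'h :: List.drop (j+2) l := by
    rw [List.drop_eq_getElem_cons (by omega), List.drop_eq_getElem_cons h]
  have h1 : 2 ≤ (l.drop j).count (l[j+1]'h) := by
    rw [hd, List.count_cons, List.count_cons]
    simp [he]
  exact h1.trans ((l.drop_sublist j).count_le _)

lemma two_indices : ∀ {l : List ℕ} {a : ℕ}, 2 ≤ l.count a →
    ∃ i, ∃ k, ∃ (hik : i < k), ∃ (hk : k < l.length), l[i]'(by omega) = a ∧ l[k]'hk = a := by
  intro l
  induction l with
  | nil => intro a h; simp at h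
  | cons b l ih =>
    intro a h
    rw [List.count_cons] at h
    simp only [beq_iff_eq] at h
    by_cases hba : a = b
    · have h1 : 1 ≤ l.count a := by
        have : (if b = a then 1 else 0) = 1 := if_pos hba.symm
        omega
      have h2 : a ∈ l := by rwa [← List.count_pos_iff]
      obtain ⟨k, hk, hka⟩ := List.mem_iff_getElem.mp h2
      exact ⟨0, k+1, by omega, by simp; omega, by simpa using hba.symm, by simpa using hka⟩
    · have h1 : 2 ≤ l.count a := by
        have : (if b = a then 1 else 0) = 0 := if_neg (fun hh => hba hh.symm)
        omega
      obtain ⟨i, k, hik, hk, hia, hka⟩ := ih h1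
      exact ⟨i+1, k+1, by omega, by simp; omega, by simpa using hia, by simpa using hka⟩

lemma exists_adj_of_two_le_count {l : List ℕ} {a : ℕ} (hs : l.Pairwise (· ≤ ·))
    (h : 2 ≤ l.count a) : ∃ j, ∃ (hj : j + 1 < l.length),
      l[j]'(by omega) = a ∧ l[j+1]'hj = a := by
  obtain ⟨i, k, hik, hk, hia, hka⟩ := two_indices h
  have hi1 : i + 1 < l.length := by omega
  have hle1 := sorted_iff_getElem.mp hs i (i+1) (by omega) hi1 (by omega)
  have hle2 : l[i+1]'hi1 ≤ a := by
    rcases eq_or_lt_of_le (show i+1 ≤ k by omega) with hek | hlt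
    · subst hek; omega
    · have := sorted_iff_getElem.mp hs (i+1) k hi1 hk hlt
      omega
  exact ⟨i, hi1, by omega, by omega⟩


lemma gap2_lower {l : List ℕ} (h : gap2 l) {j : ℕ} (hj : j < l.length) :
    l[0]'(by omega) + 2*j ≤ l[j]'hj := by
  have h2 := gap2_pair h j 0 (by omega)
  have h3 : l[0+j]'(by omega) = l[j]'hj := by simp
  omega

lemma key_id (L s t : ℕ) (h : L = s + t) :
    L*(L-1) + t*(t-1) = s*(s-1) + 2*(L-1)*t := by
  subst h
  cases t with
  | zero => simp
  | succ u =>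
    cases s with
    | zero => simp; ring
    | succ v =>
      have h1 : v + 1 + (u+1) - 1 = v + u + 1 := by omega
      rw [h1, Nat.succ_sub_one, Nat.succ_sub_one]
      ring

def toMid (m : Multiset ℕ) : Multiset ℕ :=
  ↑(destair ((m.filter (fun a => ¬ Even a)).sort (· ≤ ·))) +
  (↑(stair (((m.filter (fun a => Even a)).sort (· ≤ ·)).map
      (· - 2*(Multiset.card m - 1)))) : Multiset ℕ)

def fromMid (c : Multiset ℕ) : Multiset ℕ :=
  ↑(stair ((c.filter (fun a => ¬ Even a)).sort (· ≤ ·))) +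
  (↑((destair ((c.filter (fun a => Even a)).sort (· ≤ ·))).map
      (· + 2*(Multiset.card c - 1))) : Multiset ℕ)

def stairUp (c : Multiset ℕ) : Multiset ℕ := ↑(stair (c.sort (· ≤ ·)))

def stairDown (m : Multiset ℕ) : Multiset ℕ := ↑(destair (m.sort (· ≤ ·)))

def MidP (d : ℕ) (c : Multiset ℕ) : Prop :=
  (∀ a ∈ c, 2*d+1 ≤ a) ∧ (∀ a, Even a → c.count a ≤ 1)

def LeftP (d : ℕ) (m : Multiset ℕ) : Prop :=
  distinctOddParts m ∧ minOddGe m (2*d+1) ∧ minEvenGe m (2*(Multiset.card m + d))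

def RightP (d : ℕ) (m : Multiset ℕ) : Prop :=
  (∀ a ∈ m, 2*d+1 ≤ a) ∧ gapCond m

lemma sort_sum (s : Multiset ℕ) : (s.sort (· ≤ ·)).sum = s.sum := by
  rw [← Multiset.sum_coe, Multiset.sort_eq]

lemma toMid_spec {d : ℕ} {m : Multiset ℕ} (h : LeftP d m) :
    MidP d (toMid m) ∧ Multiset.card (toMid m) = Multiset.card m ∧
      (toMid m).sum + Multiset.card m * (Multiset.card m - 1) = m.sum ∧
      fromMid (toMid m) = m := by
  obtain ⟨hdis, hodd, heven⟩ := h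
  set L := Multiset.card m with hLdef
  set lo := (m.filter (fun a => ¬ Even a)).sort (· ≤ ·) with hlo
  set le := (m.filter (fun a => Even a)).sort (· ≤ ·) with hle
  set le' := le.map (· - 2*(L-1)) with hle'
  set co := destair lo with hco
  set ce := stair le' with hce
  have htm : toMid m = ↑co + ↑ce := by
    rw [toMid, ← hLdef, ← hlo, ← hle, ← hle', ← hco, ← hce]
  -- lo facts
  have hlos : lo.Pairwise (· ≤ ·) := by rw [hlo]; exact Multiset.pairwise_sort _ _
  have hlomem : ∀ x ∈ lo, x % 2 = 1 ∧ 2*d+1 ≤ x := by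
    intro x hx
    rw [hlo, Multiset.mem_sort, Multiset.mem_filter] at hx
    have hox : Odd x := Nat.not_even_iff_odd.mp hx.2
    exact ⟨Nat.odd_iff.mp hox, hodd x hx.1 hox⟩
  have hlond : lo.Nodup := by
    rw [← Multiset.coe_nodup, hlo, Multiset.sort_eq, Multiset.nodup_iff_count_le_one]
    intro a
    rw [Multiset.count_filter]
    split
    · next ha => exact hdis a (Nat.not_even_iff_odd.mp ha)
    · omega
  have hlog : gap2 lo := gap2_of_sorted_nodup_parity hlos hlond (fun x hx => (hlomem x hx).1)
  have hlot : tall lo := gap2_tall hlog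
  -- co facts
  have hcomem : ∀ x ∈ co, x % 2 = 1 ∧ 2*d+1 ≤ x := by
    intro x hx
    rw [hco] at hx
    obtain ⟨j, hj, hjx⟩ := List.mem_iff_getElem.mp hx
    rw [getElem_destair] at hjx
    have hj' : j < lo.length := by simpa using hj
    have h0 := gap2_lower hlog hj'
    have h1 := (hlomem _ (lo.getElem_mem hj')).1
    have h2 := (hlomem _ (lo.getElem_mem (show 0 < lo.length by omega))).2
    omega
  have hcos : co.Pairwise (· ≤ ·) := hco ▸ sorted_destair hlog
  -- le facts
  have hles : le.Pairwise (· ≤ ·) := by rw [hle]; exact Multiset.pairwise_sort _ _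
  have hlemem : ∀ x ∈ le, x % 2 = 0 ∧ 2*(L+d) ≤ x := by
    intro x hx
    rw [hle, Multiset.mem_sort, Multiset.mem_filter] at hx
    exact ⟨Nat.even_iff.mp hx.2, heven x hx.1 hx.2⟩
  have h2L : ∀ x ∈ le, 2*(L-1) ≤ x := fun x hx => by have := (hlemem x hx).2; omega
  -- le' facts
  have hleM : ∀ x ∈ le, x ∈ m := fun x hx => by
    rw [hle, Multiset.mem_sort, Multiset.mem_filter] at hx
    exact hx.1
  have hle'mem : ∀ x ∈ le', x % 2 = 0 ∧ 2*d+2 ≤ x := by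
    intro x hx
    rw [hle', List.mem_map] at hx
    obtain ⟨y, hy, rfl⟩ := hx
    have h1 := hlemem y hy
    have h2 : 0 < L := by
      rw [hLdef]
      exact Multiset.card_pos_iff_exists_mem.mpr ⟨y, hleM y hy⟩
    constructor <;> omega
  have hle's : le'.Pairwise (· ≤ ·) := hle' ▸ sorted_map_sub _ hles
  -- ce facts
  have hceg : gap2 ce := hce ▸ sorted_stair_gap2 hle's
  have hcemem : ∀ x ∈ ce, x % 2 = 0 ∧ 2*d+2 ≤ x := by
    intro x hx
    rw [hce] at hx
    obtain ⟨k, hk, hkx⟩ := List.mem_iff_getElem.mp hx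
    rw [getElem_stair] at hkx
    have hk' : k < le'.length := by simpa using hk
    have := hle'mem _ (le'.getElem_mem hk')
    constructor <;> omega
  have hcend : ce.Nodup := gap2_nodup hceg
  -- MidP
  have hmid : MidP d ((↑co + ↑ce : Multiset ℕ)) := by
    constructor
    · intro a ha
      rw [Multiset.mem_add] at ha
      rcases ha with ha | ha
      · exact (hcomem a (by simpa using ha)).2
      · have := (hcemem a (by simpa using ha)).2; omega
    · intro a hae
      rw [Multiset.count_add]
      have h1 : Multiset.count a ↑co = 0 := by
        rw [Multiset.count_eq_zero]
        intro hmem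
        have := (hcomem a (by simpa using hmem)).1
        rw [Nat.even_iff] at hae
        omega
      have h2 : Multiset.count a ↑ce ≤ 1 :=
        (Multiset.nodup_iff_count_le_one.mp (Multiset.coe_nodup.mpr hcend)) a
      omega
  -- lengths
  have hsplit : m.filter (fun a => Even a) + m.filter (fun a => ¬ Even a) = m :=
    Multiset.filter_add_not _ m
  have hsl : lo.length = Multiset.card (m.filter (fun a => ¬ Even a)) := by
    rw [hlo, Multiset.length_sort]
  have htl : le.length = Multiset.card (m.filter (fun a => Even a)) := by
    rw [hle, Multiset.length_sort]
  have hLst : le.length + lo.length = L := by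
    rw [hsl, htl, ← Multiset.card_add, hsplit]
  have hle'len : le'.length = le.length := by rw [hle']; simp
  have hcard : Multiset.card (↑co + ↑ce : Multiset ℕ) = L := by
    rw [Multiset.card_add, Multiset.coe_card, Multiset.coe_card, hco, hce,
      length_destair, length_stair, hle'len]
    omega
  -- sums
  have hsum1 : co.sum + lo.length * (lo.length - 1) = lo.sum := by
    rw [hco]
    have := sum_destair hlot
    simpa using this
  have hsum2 : ce.sum = le'.sum + le.length * (le.length - 1) := by
    rw [hce, sum_stair, hle'len]
  have hsum3 : le'.sum + 2*(L-1) * le.length = le.sum := by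
    rw [hle']
    exact sum_map_sub _ h2L
  have hsum4 : lo.sum + le.sum = m.sum := by
    rw [hlo, hle, sort_sum, sort_sum]
    have := congrArg Multiset.sum hsplit
    rw [Multiset.sum_add] at this
    omega
  have hkey := key_id L lo.length le.length (by omega)
  have hsum : (↑co + ↑ce : Multiset ℕ).sum + L * (L - 1) = m.sum := by
    rw [Multiset.sum_add, Multiset.sum_coe, Multiset.sum_coe]
    linarith [hsum1, hsum2, hsum3, hsum4, hkey]
  -- round trip
  have hf1 : Multiset.filter (fun a => ¬ Even a) ((↑co + ↑ce : Multiset ℕ)) = (↑co : Multiset ℕ) := by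
    rw [Multiset.filter_add]
    have e1 : Multiset.filter (fun a => ¬ Even a) (↑co : Multiset ℕ) = ↑co :=
      Multiset.filter_eq_self.mpr (fun a ha => by
        have := (hcomem a (by simpa using ha)).1
        rw [Nat.even_iff]; omega)
    have e2 : Multiset.filter (fun a => ¬ Even a) (↑ce : Multiset ℕ) = 0 :=
      Multiset.filter_eq_nil.mpr (fun a ha hna =>
        hna (Nat.even_iff.mpr (hcemem a (by simpa using ha)).1))
    rw [e1, e2, add_zero]
  have hf2 : Multiset.filter (fun a => Even a) ((↑co + ↑ce : Multiset ℕ)) = (↑ce : Multiset ℕ) := by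
    rw [Multiset.filter_add]
    have e1 : Multiset.filter (fun a => Even a) (↑co : Multiset ℕ) = 0 :=
      Multiset.filter_eq_nil.mpr (fun a ha hna => by
        have := (hcomem a (by simpa using ha)).1
        rw [Nat.even_iff] at hna; omega)
    have e2 : Multiset.filter (fun a => Even a) (↑ce : Multiset ℕ) = ↑ce :=
      Multiset.filter_eq_self.mpr (fun a ha =>
        Nat.even_iff.mpr (hcemem a (by simpa using ha)).1)
    rw [e1, e2, zero_add]
  have hfb : fromMid ((↑co + ↑ce : Multiset ℕ)) = m := by
    rw [fromMid, hf1, hf2, hcard, sort_coe hcos, sort_coe (gap2_sorted hceg),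
      hco, stair_destair hlot, hce, destair_stair, hle', map_sub_add _ h2L,
      hlo, hle, Multiset.sort_eq, Multiset.sort_eq, add_comm]
    exact hsplit
  rw [htm]
  exact ⟨hmid, hcard, hsum, hfb⟩


lemma fromMid_spec {d : ℕ} {c : Multiset ℕ} (h : MidP d c) :
    LeftP d (fromMid c) ∧ Multiset.card (fromMid c) = Multiset.card c ∧
      (fromMid c).sum = c.sum + Multiset.card c * (Multiset.card c - 1) ∧
      toMid (fromMid c) = c := by
  obtain ⟨hge, hcnt⟩ := h
  set L := Multiset.card c with hLdef
  set co := (c.filter (fun a => ¬ Even a)).sort (· ≤ ·) with hco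
  set ce := (c.filter (fun a => Even a)).sort (· ≤ ·) with hce
  set oc := stair co with hoc
  set dce := destair ce with hdce
  set ec := dce.map (· + 2*(L-1)) with hec
  have hfm : fromMid c = ↑oc + ↑ec := by
    rw [fromMid, ← hLdef, ← hco, ← hce, ← hoc, ← hdce, ← hec]
  -- co facts
  have hcos : co.Pairwise (· ≤ ·) := by rw [hco]; exact Multiset.pairwise_sort _ _
  have hcomem : ∀ x ∈ co, x % 2 = 1 ∧ 2*d+1 ≤ x := by
    intro x hx
    rw [hco, Multiset.mem_sort, Multiset.mem_filter] at hx
    exact ⟨Nat.odd_iff.mp (Nat.not_even_iff_odd.mp hx.2), hge x hx.1⟩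
  -- ce facts
  have hces : ce.Pairwise (· ≤ ·) := by rw [hce]; exact Multiset.pairwise_sort _ _
  have hcemem : ∀ x ∈ ce, x % 2 = 0 ∧ 2*d+2 ≤ x := by
    intro x hx
    rw [hce, Multiset.mem_sort, Multiset.mem_filter] at hx
    have h1 := Nat.even_iff.mp hx.2
    have h2 := hge x hx.1
    omega
  have hcend : ce.Nodup := by
    rw [← Multiset.coe_nodup, hce, Multiset.sort_eq, Multiset.nodup_iff_count_le_one]
    intro a
    rw [Multiset.count_filter]
    split
    · next ha => exact hcnt a ha
    · omega
  have hceg : gap2 ce := gap2_of_sorted_nodup_parity hces hcend (fun x hx => (hcemem x hx).1)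
  have hcet : tall ce := gap2_tall hceg
  -- oc facts
  have hocg : gap2 oc := hoc ▸ sorted_stair_gap2 hcos
  have hocnd : oc.Nodup := gap2_nodup hocg
  have hocmem : ∀ x ∈ oc, x % 2 = 1 ∧ 2*d+1 ≤ x := by
    intro x hx
    rw [hoc] at hx
    obtain ⟨j, hj, hjx⟩ := List.mem_iff_getElem.mp hx
    rw [getElem_stair] at hjx
    have hj' : j < co.length := by simpa using hj
    have := hcomem _ (co.getElem_mem hj')
    constructor <;> omega
  -- dce facts
  have hdces : dce.Pairwise (· ≤ ·) := hdce ▸ sorted_destair hceg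
  have hdcemem : ∀ x ∈ dce, x % 2 = 0 ∧ 2*d+2 ≤ x := by
    intro x hx
    rw [hdce] at hx
    obtain ⟨k, hk, hkx⟩ := List.mem_iff_getElem.mp hx
    rw [getElem_destair] at hkx
    have hk' : k < ce.length := by simpa using hk
    have h0 := gap2_lower hceg hk'
    have h1 := (hcemem _ (ce.getElem_mem hk')).1
    have h2 := (hcemem _ (ce.getElem_mem (show 0 < ce.length by omega))).2
    have h3 := hcet k hk'
    omega
  have hLpos : dce ≠ [] → 0 < L := by
    intro hne
    have h4 : 0 < ce.length := by
      rw [hdce] at hne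
      have := List.length_pos_iff.mpr hne
      simpa using this
    have h5 : 0 < Multiset.card (c.filter (fun a => Even a)) := by
      rw [← Multiset.length_sort (· ≤ ·), ← hce]
      exact h4
    have h6 := Multiset.card_le_card (Multiset.filter_le (fun a => Even a) c)
    omega
  -- ec facts
  have hecs : ec.Pairwise (· ≤ ·) := hec ▸ sorted_map_add _ hdces
  have hecmem : ∀ x ∈ ec, x % 2 = 0 ∧ 2*(L+d) ≤ x := by
    intro x hx
    rw [hec, List.mem_map] at hx
    obtain ⟨y, hy, rfl⟩ := hx
    have h1 := hdcemem y hy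
    have h2 : 0 < L := hLpos (by intro h0; rw [h0] at hy; simp at hy)
    constructor <;> omega
  have hsplit : c.filter (fun a => Even a) + c.filter (fun a => ¬ Even a) = c :=
    Multiset.filter_add_not _ c
  have hcard : Multiset.card ((↑oc + ↑ec : Multiset ℕ)) = L := by
    rw [Multiset.card_add, Multiset.coe_card, Multiset.coe_card, hoc, hec,
      length_stair, List.length_map, hdce, length_destair, hco, hce,
      Multiset.length_sort, Multiset.length_sort]
    have := congrArg Multiset.card hsplit
    rw [Multiset.card_add] at this
    omega
  -- LeftP
  have hleft : LeftP d ((↑oc + ↑ec : Multiset ℕ)) := by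
    refine ⟨?_, ?_, ?_⟩
    · intro a ha
      rw [Multiset.count_add]
      have h1 : Multiset.count a ↑ec = 0 := by
        rw [Multiset.count_eq_zero]
        intro hmem
        have := (hecmem a (by simpa using hmem)).1
        rw [Nat.odd_iff] at ha
        omega
      have h2 : Multiset.count a ↑oc ≤ 1 :=
        (Multiset.nodup_iff_count_le_one.mp (Multiset.coe_nodup.mpr hocnd)) a
      omega
    · intro a ha hodd
      rw [Multiset.mem_add] at ha
      rw [Nat.odd_iff] at hodd
      rcases ha with ha | ha
      · exact (hocmem a (by simpa using ha)).2
      · have := (hecmem a (by simpa using ha)).1; omega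
    · intro a ha heva
      rw [Multiset.mem_add] at ha
      rw [Nat.even_iff] at heva
      rcases ha with ha | ha
      · have := (hocmem a (by simpa using ha)).1; omega
      · have h1 := (hecmem a (by simpa using ha)).2
        rw [hcard]
        omega
  -- sums
  have hsl : co.length = Multiset.card (c.filter (fun a => ¬ Even a)) := by
    rw [hco, Multiset.length_sort]
  have htl : ce.length = Multiset.card (c.filter (fun a => Even a)) := by
    rw [hce, Multiset.length_sort]
  have hLst : ce.length + co.length = L := by
    rw [hsl, htl, ← Multiset.card_add, hsplit]
  have hdcelen : dce.length = ce.length := by rw [hdce]; simp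
  have hsum1 : oc.sum = co.sum + co.length * (co.length - 1) := by rw [hoc, sum_stair]
  have hsum2 : dce.sum + ce.length * (ce.length - 1) = ce.sum := by
    rw [hdce]
    simpa using sum_destair hcet
  have hsum3 : ec.sum = dce.sum + 2*(L-1) * ce.length := by
    rw [hec, sum_map_add, hdcelen]
  have hsum4 : co.sum + ce.sum = c.sum := by
    rw [hco, hce, sort_sum, sort_sum]
    have := congrArg Multiset.sum hsplit
    rw [Multiset.sum_add] at this
    omega
  have hkey := key_id L co.length ce.length (by omega)
  have hsum : (↑oc + ↑ec : Multiset ℕ).sum = c.sum + L * (L - 1) := by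
    rw [Multiset.sum_add, Multiset.sum_coe, Multiset.sum_coe]
    linarith [hsum1, hsum2, hsum3, hsum4, hkey]
  -- round trip
  have hf1 : Multiset.filter (fun a => ¬ Even a) ((↑oc + ↑ec : Multiset ℕ)) = (↑oc : Multiset ℕ) := by
    rw [Multiset.filter_add]
    have e1 : Multiset.filter (fun a => ¬ Even a) (↑oc : Multiset ℕ) = ↑oc :=
      Multiset.filter_eq_self.mpr (fun a ha => by
        have := (hocmem a (by simpa using ha)).1
        rw [Nat.even_iff]; omega)
    have e2 : Multiset.filter (fun a => ¬ Even a) (↑ec : Multiset ℕ) = 0 :=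
      Multiset.filter_eq_nil.mpr (fun a ha hna =>
        hna (Nat.even_iff.mpr (hecmem a (by simpa using ha)).1))
    rw [e1, e2, add_zero]
  have hf2 : Multiset.filter (fun a => Even a) ((↑oc + ↑ec : Multiset ℕ)) = (↑ec : Multiset ℕ) := by
    rw [Multiset.filter_add]
    have e1 : Multiset.filter (fun a => Even a) (↑oc : Multiset ℕ) = 0 :=
      Multiset.filter_eq_nil.mpr (fun a ha hna => by
        have := (hocmem a (by simpa using ha)).1
        rw [Nat.even_iff] at hna; omega)
    have e2 : Multiset.filter (fun a => Even a) (↑ec : Multiset ℕ) = ↑ec :=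
      Multiset.filter_eq_self.mpr (fun a ha =>
        Nat.even_iff.mpr (hecmem a (by simpa using ha)).1)
    rw [e1, e2, zero_add]
  have hfb : toMid ((↑oc + ↑ec : Multiset ℕ)) = c := by
    rw [toMid, hf1, hf2, hcard, sort_coe (gap2_sorted hocg), sort_coe hecs,
      hoc, destair_stair, hec, map_add_sub, hdce, stair_destair hcet,
      hco, hce, Multiset.sort_eq, Multiset.sort_eq, add_comm]
    exact hsplit
  rw [hfm]
  exact ⟨hleft, hcard, hsum, hfb⟩


lemma stairUp_spec {d : ℕ} {c : Multiset ℕ} (h : MidP d c) :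
    RightP d (stairUp c) ∧ Multiset.card (stairUp c) = Multiset.card c ∧
      (stairUp c).sum = c.sum + Multiset.card c * (Multiset.card c - 1) ∧
      stairDown (stairUp c) = c := by
  obtain ⟨hge, hcnt⟩ := h
  set sc := c.sort (· ≤ ·) with hsc
  have hsu : stairUp c = ↑(stair sc) := by rw [stairUp, ← hsc]
  have hscs : sc.Pairwise (· ≤ ·) := by rw [hsc]; exact Multiset.pairwise_sort _ _
  have hscmem : ∀ x ∈ sc, 2*d+1 ≤ x := by
    intro x hx
    rw [hsc, Multiset.mem_sort] at hx
    exact hge x hx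
  have hbg : gap2 (stair sc) := sorted_stair_gap2 hscs
  have hbnd : (stair sc).Nodup := gap2_nodup hbg
  have hidx : ∀ x, x ∈ stair sc → ∀ y, y ∈ stair sc → x < y →
      ∃ i j, ∃ (hij : i < j), ∃ (hj : j < (stair sc).length),
        (stair sc)[i]'(by omega) = x ∧ (stair sc)[j]'hj = y := by
    intro x hx y hy hxy
    obtain ⟨i, hi, hix⟩ := List.mem_iff_getElem.mp hx
    obtain ⟨j, hj, hjy⟩ := List.mem_iff_getElem.mp hy
    have hne : i ≠ j := by intro hE; subst hE; omega
    rcases lt_or_gt_of_ne hne with hij | hij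
    · exact ⟨i, j, hij, hj, hix, hjy⟩
    · exfalso
      have h2 := gap2_pair hbg (i - j) j (by omega)
      have h3 : (stair sc)[j + (i-j)]'(by omega) = (stair sc)[i]'hi := by congr 1; omega
      omega
  have hright : RightP d (↑(stair sc) : Multiset ℕ) := by
    refine ⟨?_, ?_, ?_, ?_⟩
    · intro a ha
      obtain ⟨j, hj, hjx⟩ := List.mem_iff_getElem.mp (by simpa using ha : a ∈ stair sc)
      rw [getElem_stair] at hjx
      have hj' : j < sc.length := by simpa using hj
      have := hscmem _ (sc.getElem_mem hj')
      omega
    · intro a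
      rw [Multiset.coe_count]
      exact List.nodup_iff_count_le_one.mp hbnd a
    · intro x hx y hy hxy
      obtain ⟨i, j, hij, hj, hix, hjy⟩ := hidx x (by simpa using hx) y (by simpa using hy) hxy
      have h2 := gap2_pair hbg (j - i) i (by omega)
      have h3 : (stair sc)[i + (j-i)]'(by omega) = (stair sc)[j]'hj := by congr 1; omega
      omega
    · intro x hx y hy hex hey hxy
      obtain ⟨i, j, hij, hj, hix, hjy⟩ := hidx x (by simpa using hx) y (by simpa using hy) hxy
      by_cases hj2 : i + 2 ≤ j
      · have h2 := gap2_pair hbg (j - i) i (by omega)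
        have h3 : (stair sc)[i + (j-i)]'(by omega) = (stair sc)[j]'hj := by congr 1; omega
        omega
      · -- adjacent case
        have hj1 : j = i + 1 := by omega
        subst hj1
        have hi' : i < sc.length := by simp at hj; omega
        have hi1' : i + 1 < sc.length := by simpa using hj
        rw [getElem_stair] at hix hjy
        rw [Nat.even_iff] at hex hey
        have hmod1 : sc[i]'hi' % 2 = 0 := by omega
        have hmod2 : sc[i+1]'hi1' % 2 = 0 := by omega
        rcases eq_or_lt_of_le (sorted_iff_getElem.mp hscs i (i+1) hi' hi1' (by omega)) with hE | hL
        · exfalso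
          have h2 := two_le_count_of_adj hi1' hE
          have h3 : Multiset.count (sc[i+1]'hi1') c ≤ 1 :=
            hcnt _ (Nat.even_iff.mpr hmod2)
          rw [← Multiset.sort_eq c (· ≤ ·), ← hsc, Multiset.coe_count] at h3
          omega
        · omega
  have hcard : Multiset.card (↑(stair sc) : Multiset ℕ) = Multiset.card c := by
    rw [Multiset.coe_card, length_stair, hsc, Multiset.length_sort]
  have hsum : (↑(stair sc) : Multiset ℕ).sum = c.sum + Multiset.card c * (Multiset.card c - 1) := by
    rw [Multiset.sum_coe, sum_stair, hsc, Multiset.length_sort, sort_sum]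
  have hrt : stairDown (↑(stair sc) : Multiset ℕ) = c := by
    rw [stairDown, sort_coe (gap2_sorted hbg), destair_stair, hsc, Multiset.sort_eq]
  rw [hsu]
  exact ⟨hright, hcard, hsum, hrt⟩

lemma stairDown_spec {d : ℕ} {m : Multiset ℕ} (h : RightP d m) :
    MidP d (stairDown m) ∧ Multiset.card (stairDown m) = Multiset.card m ∧
      (stairDown m).sum + Multiset.card m * (Multiset.card m - 1) = m.sum ∧
      stairUp (stairDown m) = m := by
  obtain ⟨hge, hcnt, hgap, hgap4⟩ := h
  set l := m.sort (· ≤ ·) with hl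
  have hsd : stairDown m = ↑(destair l) := by rw [stairDown, ← hl]
  have hls : l.Pairwise (· ≤ ·) := by rw [hl]; exact Multiset.pairwise_sort _ _
  have hlm : ∀ x ∈ l, x ∈ m := fun x hx => by
    rw [hl, Multiset.mem_sort] at hx; exact hx
  have hlnd : l.Nodup := by
    rw [← Multiset.coe_nodup, hl, Multiset.sort_eq, Multiset.nodup_iff_count_le_one]
    exact hcnt
  have hlg : gap2 l := by
    intro j hj
    have h1 := sorted_iff_getElem.mp hls j (j+1) (by omega) hj (by omega)
    have h2 := List.pairwise_iff_getElem.mp hlnd j (j+1) (by omega) hj (by omega)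
    exact hgap _ (hlm _ (l.getElem_mem (by omega))) _ (hlm _ (l.getElem_mem hj)) (by omega)
  have hlt : tall l := gap2_tall hlg
  have hcs : (destair l).Pairwise (· ≤ ·) := sorted_destair hlg
  have hcmem : ∀ x ∈ destair l, 2*d+1 ≤ x := by
    intro x hx
    obtain ⟨j, hj, hjx⟩ := List.mem_iff_getElem.mp hx
    rw [getElem_destair] at hjx
    have hj' : j < l.length := by simpa using hj
    have h0 := gap2_lower hlg hj'
    have h1 := hge _ (hlm _ (l.getElem_mem (show 0 < l.length by omega)))
    omega
  have hmid : MidP d (↑(destair l) : Multiset ℕ) := by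
    constructor
    · intro a ha
      exact hcmem a (by simpa using ha)
    · intro a hae
      by_contra hcon
      push_neg at hcon
      rw [Multiset.coe_count] at hcon
      obtain ⟨j, hj, hja, hj1a⟩ := exists_adj_of_two_le_count (a := a) hcs (by omega)
      have hj' : j + 1 < l.length := by simpa using hj
      rw [getElem_destair] at hja hj1a
      have ht1 := hlt j (by omega)
      have ht2 := hlt (j+1) hj'
      rw [Nat.even_iff] at hae
      have hev1 : Even (l[j]'(by omega)) := Nat.even_iff.mpr (by omega)
      have hev2 : Even (l[j+1]'hj') := Nat.even_iff.mpr (by omega)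
      have h4 := hgap4 _ (hlm _ (l.getElem_mem (by omega))) _ (hlm _ (l.getElem_mem hj'))
        hev1 hev2 (by omega)
      omega
  have hcard : Multiset.card (↑(destair l) : Multiset ℕ) = Multiset.card m := by
    rw [Multiset.coe_card, length_destair, hl, Multiset.length_sort]
  have hsum : (↑(destair l) : Multiset ℕ).sum + Multiset.card m * (Multiset.card m - 1) = m.sum := by
    have h5 := sum_destair hlt
    rw [Multiset.sum_coe]
    rw [hl] at h5 ⊢
    rw [Multiset.length_sort, sort_sum] at h5
    exact h5
  have hrt : stairUp (↑(destair l) : Multiset ℕ) = m := by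
    rw [stairUp, sort_coe hcs, stair_destair hlt, hl, Multiset.sort_eq]
  rw [hsd]
  exact ⟨hmid, hcard, hsum, hrt⟩


def fwd (m : Multiset ℕ) : Multiset ℕ := stairUp (toMid m)
def bwd (m : Multiset ℕ) : Multiset ℕ := fromMid (stairDown m)

def lift (n : ℕ) (f : Multiset ℕ → Multiset ℕ) (p : n.Partition) : n.Partition :=
  if h : (f p.parts).sum = n ∧ (0 : ℕ) ∉ f p.parts then
    ⟨f p.parts, fun {i} hi => Nat.pos_of_ne_zero (fun e => h.2 (e ▸ hi)), h.1⟩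
  else p

lemma lift_parts {n : ℕ} {f : Multiset ℕ → Multiset ℕ} {p : n.Partition}
    (h1 : (f p.parts).sum = n) (h2 : (0 : ℕ) ∉ f p.parts) :
    (lift n f p).parts = f p.parts := by
  rw [lift, dif_pos ⟨h1, h2⟩]

lemma fwd_full {d : ℕ} {m : Multiset ℕ} (h : LeftP d m) :
    RightP d (fwd m) ∧ (fwd m).sum = m.sum ∧ bwd (fwd m) = m := by
  obtain ⟨hm1, hm2, hm3, hm4⟩ := toMid_spec h
  obtain ⟨hu1, hu2, hu3, hu4⟩ := stairUp_spec hm1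
  refine ⟨hu1, ?_, ?_⟩
  · rw [fwd, hu3, hm2]
    exact hm3
  · rw [bwd, fwd, hu4]
    exact hm4

lemma bwd_full {d : ℕ} {m : Multiset ℕ} (h : RightP d m) :
    LeftP d (bwd m) ∧ (bwd m).sum = m.sum ∧ fwd (bwd m) = m := by
  obtain ⟨hd1, hd2, hd3, hd4⟩ := stairDown_spec h
  obtain ⟨hf1, hf2, hf3, hf4⟩ := fromMid_spec hd1
  refine ⟨hf1, ?_, ?_⟩
  · rw [bwd, hf3, hd2]
    exact hd3
  · rw [fwd, bwd, hf4]
    exact hd4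

lemma rightP_zero_not_mem {d : ℕ} {m : Multiset ℕ} (h : RightP d m) : (0 : ℕ) ∉ m := by
  intro h0
  have := h.1 0 h0
  omega

lemma leftP_zero_not_mem {d : ℕ} {m : Multiset ℕ} (h : LeftP d m) : (0 : ℕ) ∉ m := by
  intro h0
  have h1 := h.2.2 0 h0 (Even.zero)
  have h2 : 0 < Multiset.card m := Multiset.card_pos_iff_exists_mem.mpr ⟨0, h0⟩
  omega

theorem master (n d : ℕ) :
    {p : n.Partition | LeftP d p.parts}.ncard = {p : n.Partition | RightP d p.parts}.ncard := by
  have hbij : Set.BijOn (lift n fwd) {p : n.Partition | LeftP d p.parts}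
      {p : n.Partition | RightP d p.parts} := by
    have hparts : ∀ p : n.Partition, LeftP d p.parts → (lift n fwd p).parts = fwd p.parts := by
      intro p hp
      exact lift_parts ((fwd_full hp).2.1.trans p.parts_sum)
        (rightP_zero_not_mem (fwd_full hp).1)
    have hparts' : ∀ q : n.Partition, RightP d q.parts → (lift n bwd q).parts = bwd q.parts := by
      intro q hq
      exact lift_parts ((bwd_full hq).2.1.trans q.parts_sum)
        (leftP_zero_not_mem (bwd_full hq).1)
    refine ⟨?_, ?_, ?_⟩
    · intro p hp
      simp only [Set.mem_setOf_eq] at hp ⊢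
      rw [hparts p hp]
      exact (fwd_full hp).1
    · intro p hp q hq hpq
      simp only [Set.mem_setOf_eq] at hp hq
      have h1 : fwd p.parts = fwd q.parts := by
        rw [← hparts p hp, ← hparts q hq, hpq]
      have h2 : p.parts = q.parts := by
        rw [← (fwd_full hp).2.2, ← (fwd_full hq).2.2, h1]
      exact Nat.Partition.ext h2
    · intro q hq
      simp only [Set.mem_setOf_eq] at hq
      refine ⟨lift n bwd q, ?_, ?_⟩
      · simp only [Set.mem_setOf_eq]
        rw [hparts' q hq]
        exact (bwd_full hq).1
      · have hmem : LeftP d (lift n bwd q).parts := by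
          rw [hparts' q hq]; exact (bwd_full hq).1
        apply Nat.Partition.ext
        rw [hparts _ hmem, hparts' q hq]
        exact (bwd_full hq).2.2
  rw [← Set.BijOn.image_eq hbij, Set.ncard_image_of_injOn hbij.injOn]

end NC

/-- The new companion to the Göllnitz–Gordon identities. -/
theorem new_companion (n i : ℕ) (hi : i = 1 ∨ i = 2) :
    {p : n.Partition | distinctOddParts p.parts ∧ minOddGe p.parts (2 * i - 1) ∧
        minEvenGe p.parts (2 * (Multiset.card p.parts + i - 1))}.ncard =
      {p : n.Partition | (∀ a ∈ p.parts, 2 * i - 1 ≤ a) ∧ gapCond p.parts}.ncard := by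
  obtain rfl | rfl := hi
  · have e1 : {p : n.Partition | distinctOddParts p.parts ∧ minOddGe p.parts (2 * 1 - 1) ∧
        minEvenGe p.parts (2 * (Multiset.card p.parts + 1 - 1))} =
        {p : n.Partition | NC.LeftP 0 p.parts} := by
      ext p
      simp [NC.LeftP]
    have e2 : {p : n.Partition | (∀ a ∈ p.parts, 2 * 1 - 1 ≤ a) ∧ gapCond p.parts} =
        {p : n.Partition | NC.RightP 0 p.parts} := by
      ext p
      simp [NC.RightP]
    rw [e1, e2]
    exact NC.master n 0
  · have e1 : {p : n.Partition | distinctOddParts p.parts ∧ minOddGe p.parts (2 * 2 - 1) ∧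
        minEvenGe p.parts (2 * (Multiset.card p.parts + 2 - 1))} =
        {p : n.Partition | NC.LeftP 1 p.parts} := by
      ext p
      have : ∀ c : ℕ, c + 2 - 1 = c + 1 := fun c => by omega
      simp [NC.LeftP, this]
    have e2 : {p : n.Partition | (∀ a ∈ p.parts, 2 * 2 - 1 ≤ a) ∧ gapCond p.parts} =
        {p : n.Partition | NC.RightP 1 p.parts} := by
      ext p
      simp [NC.RightP]
    rw [e1, e2]
    exact NC.master n 1
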